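/- For general p ≥ 1 and 0 < u < t, the derivative of ln_t (the p-th order Taylor expansion of ln at t) equals [1 - (1 - u/t)^p] · (1/u). Consequently, the tangent likelihood score equals the likelihood score times the weight w(u) = 1 - (1 - u/t)^p. -/

import Mathlib

noncomputable def lntp (t : ℝ) (p : ℕ) (u : ℝ) : ℝ :=
  if t < u then Real.log u
  else Real.log t +
    ∑ k ∈ Finset.Icc 1 p,
      ((-1 : ℝ) ^ (k - 1) * (Nat.factorial (k - 1) : ℝ) / t ^ k) * (u - t) ^ k
        / (Nat.factorial k : ℝ)

theorem lntp_hasDerivAt (t : ℝ) (ht : 0 < t) (p : ℕ) (hp : 1 ≤ p)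
    (u : ℝ) (hu : 0 < u) (hut : u < t) :
    HasDerivAt (lntp t p) ((1 - (1 - u / t) ^ p) * (1 / u)) u := by
  have ht0 : t ≠ 0 := ne_of_gt ht
  have hu0 : u ≠ 0 := ne_of_gt hu
  -- the polynomial branch
  set f : ℝ → ℝ := fun x => Real.log t +
    ∑ k ∈ Finset.Icc 1 p,
      ((-1 : ℝ) ^ (k - 1) * (Nat.factorial (k - 1) : ℝ) / t ^ k) * (x - t) ^ k
        / (Nat.factorial k : ℝ) with hf
  have heq : lntp t p =ᶠ[nhds u] f := by
    filter_upwards [Iio_mem_nhds hut] with x hx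
    have : ¬ t < x := not_lt.mpr (le_of_lt hx)
    simp [lntp, this, hf]
  have hderiv : HasDerivAt f
      (∑ k ∈ Finset.Icc 1 p,
        ((-1 : ℝ) ^ (k - 1) * (Nat.factorial (k - 1) : ℝ) / t ^ k) *
          ((k : ℝ) * (u - t) ^ (k - 1)) / (Nat.factorial k : ℝ)) u := by
    have : HasDerivAt (fun x => ∑ k ∈ Finset.Icc 1 p,
        ((-1 : ℝ) ^ (k - 1) * (Nat.factorial (k - 1) : ℝ) / t ^ k) * (x - t) ^ k
          / (Nat.factorial k : ℝ))
        (∑ k ∈ Finset.Icc 1 p,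
          ((-1 : ℝ) ^ (k - 1) * (Nat.factorial (k - 1) : ℝ) / t ^ k) *
            ((k : ℝ) * (u - t) ^ (k - 1)) / (Nat.factorial k : ℝ)) u := by
      apply HasDerivAt.fun_sum
      intro k hk
      have h1 : HasDerivAt (fun x : ℝ => (x - t) ^ k)
          ((k : ℝ) * (u - t) ^ (k - 1) * 1) u := ((hasDerivAt_id u).sub_const t).pow k
      simpa [mul_comm, mul_assoc, mul_left_comm] using
        ((h1.const_mul ((-1 : ℝ) ^ (k - 1) * (Nat.factorial (k - 1) : ℝ) / t ^ k)).div_const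
          (Nat.factorial k : ℝ))
    simpa [hf] using this.const_add (Real.log t)
  have hval : (∑ k ∈ Finset.Icc 1 p,
        ((-1 : ℝ) ^ (k - 1) * (Nat.factorial (k - 1) : ℝ) / t ^ k) *
          ((k : ℝ) * (u - t) ^ (k - 1)) / (Nat.factorial k : ℝ))
      = (1 - (1 - u / t) ^ p) * (1 / u) := by
    rw [show Finset.Icc 1 p = Finset.Ico 1 (p+1) from (Finset.Ico_add_one_right_eq_Icc 1 p).symm,
      Finset.sum_Ico_eq_sum_range]
    have hterm : ∀ i ∈ Finset.range (p + 1 - 1),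
        ((-1 : ℝ) ^ (1 + i - 1) * (Nat.factorial (1 + i - 1) : ℝ) / t ^ (1 + i)) *
          (((1 + i : ℕ) : ℝ) * (u - t) ^ (1 + i - 1)) / (Nat.factorial (1 + i) : ℝ)
        = (1 / t) * ((t - u) / t) ^ i := by
      intro i _
      have h1 : 1 + i - 1 = i := by omega
      have h2 : (Nat.factorial (1 + i) : ℝ) = ((1 + i : ℕ) : ℝ) * (Nat.factorial i : ℝ) := by
        rw [show 1 + i = i + 1 by omega, Nat.factorial_succ]
        push_cast; ring
      have hfac : (Nat.factorial i : ℝ) ≠ 0 := Nat.cast_ne_zero.mpr (Nat.factorial_ne_zero i)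
      have hi1 : ((1 + i : ℕ) : ℝ) ≠ 0 := by positivity
      rw [h1, h2, pow_add]
      field_simp
      rw [show ((t : ℝ) - u) = -1 * (u - t) by ring, div_pow, mul_pow]
      field_simp
    rw [Finset.sum_congr rfl hterm, ← Finset.mul_sum]
    have hr : ((t - u) / t) ≠ 1 := by
      intro h
      rw [div_eq_one_iff_eq ht0] at h
      linarith
    rw [geom_sum_eq hr]
    have h3 : (t - u) / t - 1 = -(u / t) := by field_simp; ring
    have h4 : (t - u) / t = 1 - u / t := by field_simp
    rw [h3, h4, show p + 1 - 1 = p from rfl]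
    field_simp
    ring
  rw [← hval]
  exact hderiv.congr_of_eventuallyEq heq
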